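/- Let (X, δ) be a metric-like space and let I be an admissible ideal of subsets of ℕ satisfying the condition (AP). If a sequence (x_n) in X is I-convergent to x₀ ∈ X, then (x_n) is I*-convergent to x₀. -/

import Mathlib

open Filter Topology

/-- A metric-like space structure on `X`. -/
structure MetricLike (X : Type*) where
  d : X → X → ℝ
  nonneg : ∀ x y, 0 ≤ d x y
  eq_of_eq_zero : ∀ x y, d x y = 0 → x = y
  symm : ∀ x y, d x y = d y x
  triangle : ∀ x y z, d x y ≤ d x z + d z y

/-- `I` is an ideal of subsets of `ℕ`. -/
def IsIdeal (I : Set (Set ℕ)) : Prop :=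
  ∅ ∈ I ∧ (∀ A B : Set ℕ, A ∈ I → B ∈ I → A ∪ B ∈ I) ∧
    (∀ A B : Set ℕ, A ∈ I → B ⊆ A → B ∈ I)

/-- `I` is an admissible ideal of subsets of `ℕ`. -/
def IsAdmissibleIdeal (I : Set (Set ℕ)) : Prop :=
  IsIdeal I ∧ (Set.univ : Set ℕ) ∉ I ∧ ∀ n : ℕ, ({n} : Set ℕ) ∈ I

/-- Usual convergence of a sequence in a metric-like space. -/
def MLConv {X : Type*} (δ : MetricLike X) (x : ℕ → X) (x₀ : X) : Prop :=
  ∀ ε : ℝ, 0 < ε → ∃ k₀ : ℕ, ∀ n ≥ k₀, |δ.d (x n) x₀ - δ.d x₀ x₀| < ε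

/-- `I`-convergence of a sequence in a metric-like space. -/
def MLIConv (I : Set (Set ℕ)) {X : Type*} (δ : MetricLike X) (x : ℕ → X) (x₀ : X) : Prop :=
  ∀ ε : ℝ, 0 < ε → {n : ℕ | ε ≤ |δ.d (x n) x₀ - δ.d x₀ x₀|} ∈ I

/-- `I*`-convergence of a sequence in a metric-like space: there is a set
`M = {n₁ < n₂ < …}` in the filter `F(I)` (i.e. with complement in `I`) such that
`δ(x_{n_k}, x₀) → δ(x₀, x₀)`. -/
def MLIStarConv (I : Set (Set ℕ)) {X : Type*} (δ : MetricLike X) (x : ℕ → X) (x₀ : X) : Prop :=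
  ∃ M : Set ℕ, Mᶜ ∈ I ∧ ∃ nk : ℕ → ℕ, StrictMono nk ∧ Set.range nk = M ∧
    Tendsto (fun k => δ.d (x (nk k)) x₀) atTop (𝓝 (δ.d x₀ x₀))

/-- The open `δ`-ball with centre `c` and radius `ε`. -/
def MLBall {X : Type*} (δ : MetricLike X) (c : X) (ε : ℝ) : Set X :=
  {x : X | |δ.d x c - δ.d c c| < ε}

/-- The `T₀` separation axiom for a metric-like space. -/
def MLT0 {X : Type*} (δ : MetricLike X) : Prop :=
  ∀ x y : X, x ≠ y → ∃ (c : X) (ε : ℝ), 0 < ε ∧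
    ((x ∈ MLBall δ c ε ∧ y ∉ MLBall δ c ε) ∨ (y ∈ MLBall δ c ε ∧ x ∉ MLBall δ c ε))

/-- `x₀` is a limit point of the metric-like space `X`. -/
def MLLimitPoint {X : Type*} (δ : MetricLike X) (x₀ : X) : Prop :=
  ∀ r : ℝ, 0 < r → (MLBall δ x₀ r ∩ {x₀}ᶜ).Nonempty

/-- `x₀` is an isolated point of the metric-like space `X`. -/
def MLIsolated {X : Type*} (δ : MetricLike X) (x₀ : X) : Prop :=
  ∃ r : ℝ, 0 < r ∧ MLBall δ x₀ r = {x₀}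

/-- The condition (AP) for an ideal of subsets of `ℕ`. -/
def HasAP (I : Set (Set ℕ)) : Prop :=
  ∀ A : ℕ → Set ℕ, (∀ j, A j ∈ I) → (∀ i j, i ≠ j → Disjoint (A i) (A j)) →
    ∃ B : ℕ → Set ℕ, (∀ j, (symmDiff (A j) (B j)).Finite) ∧ (⋃ j, B j) ∈ I

theorem ideal_convergent_imp_ideal_star_convergent_of_AP {X : Type*}
    (δ : MetricLike X) (I : Set (Set ℕ)) (hI : IsAdmissibleIdeal I)
    (hAP : HasAP I) (x : ℕ → X) (x₀ : X)
    (h : MLIConv I δ x x₀) : MLIStarConv I δ x x₀ := by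
  classical
  obtain ⟨⟨hempty, hunion, hsub⟩, huniv, hsingle⟩ := hI
  set g : ℕ → ℝ := fun n => |δ.d (x n) x₀ - δ.d x₀ x₀| with hg
  have hfinF : ∀ t : Finset ℕ, (t : Set ℕ) ∈ I := by
    intro t
    induction t using Finset.induction_on with
    | empty => simpa using hempty
    | insert _ _ _ ih =>
      rw [Finset.coe_insert, Set.insert_eq]
      exact hunion _ _ (hsingle _) ih
  have hfinI : ∀ s : Set ℕ, s.Finite → s ∈ I := by
    intro s hs
    have := hfinF hs.toFinset
    rwa [Set.Finite.coe_toFinset] at this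
  -- the annuli
  set A : ℕ → Set ℕ := fun j =>
    match j with
    | 0 => {n | 1 ≤ g n}
    | j + 1 => {n | 1 / (j + 2 : ℝ) ≤ g n ∧ g n < 1 / (j + 1 : ℝ)} with hA
  have hAmem : ∀ j, A j ∈ I := by
    intro j
    match j with
    | 0 => exact h 1 one_pos
    | j + 1 =>
      refine hsub _ _ (h (1 / (j + 2 : ℝ)) (by positivity)) ?_
      intro n hn
      exact hn.1
  have hAdisj : ∀ i j, i ≠ j → Disjoint (A i) (A j) := by
    have key : ∀ i j : ℕ, i < j → Disjoint (A i) (A j) := by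
      intro i j hij
      rw [Set.disjoint_left]
      intro n hni hnj
      match i, j with
      | 0, 0 => omega
      | 0, j + 1 =>
        have h1 : (1 : ℝ) ≤ g n := hni
        have h2 : g n < 1 / (j + 1 : ℝ) := hnj.2
        have : 1 / (j + 1 : ℝ) ≤ 1 := by
          rw [div_le_one (by positivity)]; linarith [Nat.cast_nonneg (α := ℝ) j]
        linarith
      | i + 1, 0 => omega
      | i + 1, j + 1 =>
        have h1 : 1 / (i + 2 : ℝ) ≤ g n := hni.1
        have h2 : g n < 1 / (j + 1 : ℝ) := hnj.2
        have hij' : (i : ℝ) + 2 ≤ j + 1 := by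
          have : i + 1 ≤ j := by omega
          have := Nat.cast_le (α := ℝ).2 this
          push_cast at this ⊢; linarith
        have : 1 / (j + 1 : ℝ) ≤ 1 / (i + 2 : ℝ) :=
          one_div_le_one_div_of_le (by positivity) hij'
        linarith
    intro i j hij
    rcases lt_or_gt_of_ne hij with h' | h'
    · exact key i j h'
    · exact (key j i h').symm
  obtain ⟨B, hBfin, hBI⟩ := hAP A hAmem hAdisj
  set M : Set ℕ := (⋃ j, B j)ᶜ with hM
  have hMc : Mᶜ ∈ I := by rw [hM, compl_compl]; exact hBI
  -- key: each A i ∩ M is finite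
  have hAiM : ∀ i, (A i ∩ M).Finite := by
    intro i
    refine (hBfin i).subset fun n hn => ?_
    rcases hn with ⟨hnA, hnM⟩
    have : n ∉ B i := fun hc => hnM (Set.mem_iUnion.2 ⟨i, hc⟩)
    simp [symmDiff, Set.mem_union, Set.mem_diff]
    tauto
  -- small tails on M
  have hMsmall : ∀ ε : ℝ, 0 < ε → ∃ k₀ : ℕ, ∀ n ∈ M, k₀ ≤ n → g n < ε := by
    intro ε hε
    obtain ⟨j, hj⟩ := exists_nat_one_div_lt hε
    have hS : (⋃ i ∈ Set.Iic j, A i ∩ M).Finite :=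
      (Set.finite_Iic j).biUnion fun i _ => hAiM i
    obtain ⟨k₀, hk₀⟩ := hS.bddAbove
    refine ⟨k₀ + 1, fun n hnM hn => ?_⟩
    by_contra hcon
    push_neg at hcon
    have hnS : n ∈ ⋃ i ∈ Set.Iic j, A i ∩ M := by
      have hgn : 1 / (j + 1 : ℝ) < g n := lt_of_lt_of_le hj hcon
      by_cases h1 : 1 ≤ g n
      · exact Set.mem_biUnion (Set.mem_Iic.2 (Nat.zero_le j)) ⟨h1, hnM⟩
      · push_neg at h1
        have hgpos : 0 < g n := lt_trans (by positivity) hgn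
        set t : ℝ := 1 / g n with ht
        have htg1 : 1 < t := by rw [ht, lt_div_iff₀ hgpos]; linarith
        have hc2 : 2 ≤ ⌈t⌉₊ := by
          have : 1 < ⌈t⌉₊ := Nat.lt_ceil.2 (by exact_mod_cast htg1)
          omega
        set i : ℕ := ⌈t⌉₊ - 2 with hi
        have hi2 : (i : ℝ) + 2 = ⌈t⌉₊ := by
          rw [hi]; push_cast [Nat.cast_sub hc2]; ring
        have hi1 : (i : ℝ) + 1 = (⌈t⌉₊ : ℝ) - 1 := by rw [← hi2]; ring
        have htle : t ≤ (i : ℝ) + 2 := by rw [hi2]; exact Nat.le_ceil t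
        have htgt : (i : ℝ) + 1 < t := by
          rw [hi1]
          have := Nat.ceil_lt_add_one (le_of_lt (lt_trans one_pos htg1))
          linarith
        have hmem : n ∈ A (i + 1) := by
          constructor
          · show 1 / ((i : ℝ) + 2) ≤ g n
            rw [ht] at htle
            rw [div_le_iff₀ (by positivity)]
            rw [div_le_iff₀ hgpos] at htle
            linarith
          · show g n < 1 / ((i : ℝ) + 1)
            rw [ht] at htgt
            rw [lt_div_iff₀ (by positivity)]
            rw [lt_div_iff₀ hgpos] at htgt
            linarith
        have hup : g n < 1 / ((i : ℝ) + 1) := by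
          rw [ht] at htgt
          rw [lt_div_iff₀ (by positivity)]
          rw [lt_div_iff₀ hgpos] at htgt
          linarith
        have hile : i + 1 ≤ j := by
          have h1j : 1 / ((j : ℝ) + 1) < 1 / ((i : ℝ) + 1) := lt_trans hgn hup
          have : (i : ℝ) + 1 < (j : ℝ) + 1 := by
            by_contra hcc
            push_neg at hcc
            have := one_div_le_one_div_of_le (by positivity : (0:ℝ) < (j:ℝ)+1) hcc
            linarith
          have : i < j := by exact_mod_cast (by linarith : (i : ℝ) < (j : ℝ))
          omega
        exact Set.mem_biUnion (Set.mem_Iic.2 hile) ⟨hmem, hnM⟩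
    have := hk₀ hnS
    omega
  -- M is infinite
  have hMinf : M.Infinite := by
    intro hfin
    exact huniv (by simpa using hunion _ _ (hfinI M hfin) hMc)
  haveI : Infinite M := hMinf.to_subtype
  refine ⟨M, hMc, Nat.orderEmbeddingOfSet M, (Nat.orderEmbeddingOfSet M).strictMono,
    Nat.orderEmbeddingOfSet_range M, ?_⟩
  rw [Metric.tendsto_atTop]
  intro ε hε
  obtain ⟨k₀, hk₀⟩ := hMsmall ε hε
  refine ⟨k₀, fun k hk => ?_⟩
  rw [Real.dist_eq]
  have hmem : Nat.orderEmbeddingOfSet M k ∈ M := by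
    have h1 : Nat.orderEmbeddingOfSet M k ∈ Set.range (Nat.orderEmbeddingOfSet M) :=
      Set.mem_range_self k
    rwa [Nat.orderEmbeddingOfSet_range] at h1
  exact hk₀ _ hmem (le_trans hk ((Nat.orderEmbeddingOfSet M).strictMono.le_apply))
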